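/- Let K > 0, N > 1, and let h : (a,b) → (0,∞) satisfy, for all a < t₀ < t₁ < b, the two-sided bound (sin((b−t₁)√(K/(N−1)))/sin((b−t₀)√(K/(N−1))))^{N−1} ≤ h(t₁)/h(t₀) ≤ (sin((t₁−a)√(K/(N−1)))/sin((t₀−a)√(K/(N−1))))^{N−1}, where b − a ≤ π√((N−1)/K). Then h is locally Lipschitz continuous on (a,b). -/

import Mathlib

open Real Set

private lemma stmt6_rpow_lip {φ φ' : ℝ → ℝ} {s : Set ℝ} (hconv : Convex ℝ s)
    {p m c : ℝ} (hp : 0 < p) (hm : 0 < m)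
    (hφd : ∀ t ∈ s, HasDerivAt φ (φ' t) t)
    (hφm : ∀ t ∈ s, m ≤ φ t) (hφ1 : ∀ t ∈ s, φ t ≤ 1)
    (hc : ∀ t ∈ s, |φ' t| ≤ c) :
    ∀ t₀ ∈ s, ∀ t₁ ∈ s,
      |φ t₁ ^ p - φ t₀ ^ p| ≤ c * p * (m ^ (p - 1) + 1) * |t₁ - t₀| := by
  intro t₀ h₀ t₁ h₁
  have key := Convex.norm_image_sub_le_of_norm_hasDerivWithin_le
    (f := fun t => φ t ^ p) (f' := fun t => φ' t * p * φ t ^ (p - 1))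
    (C := c * p * (m ^ (p - 1) + 1))
    (fun t ht => ((hφd t ht).rpow_const
      (Or.inl (ne_of_gt (lt_of_lt_of_le hm (hφm t ht))))).hasDerivWithinAt)
    (fun t ht => ?_) hconv h₀ h₁
  · simpa [Real.norm_eq_abs] using key
  · have hφpos : 0 < φ t := lt_of_lt_of_le hm (hφm t ht)
    have hb : φ t ^ (p - 1) ≤ m ^ (p - 1) + 1 := by
      rcases le_or_gt 0 (p - 1) with hq | hq
      · have h1 : φ t ^ (p - 1) ≤ 1 := Real.rpow_le_one hφpos.le (hφ1 t ht) hq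
        have h2 : 0 ≤ m ^ (p - 1) := Real.rpow_nonneg hm.le _
        linarith
      · have := Real.rpow_le_rpow_of_nonpos hm (hφm t ht) hq.le
        linarith
    have hc0 : 0 ≤ c := le_trans (abs_nonneg _) (hc t ht)
    have hrn : 0 ≤ φ t ^ (p - 1) := Real.rpow_nonneg hφpos.le _
    calc ‖φ' t * p * φ t ^ (p - 1)‖ = |φ' t| * p * φ t ^ (p - 1) := by
          rw [Real.norm_eq_abs, abs_mul, abs_mul, abs_of_pos hp, abs_of_nonneg hrn]
      _ ≤ c * p * (m ^ (p - 1) + 1) := by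
          have a1 : |φ' t| * p * φ t ^ (p - 1) ≤ c * p * φ t ^ (p - 1) :=
            mul_le_mul_of_nonneg_right
              (mul_le_mul_of_nonneg_right (hc t ht) hp.le) hrn
          have a2 : c * p * φ t ^ (p - 1) ≤ c * p * (m ^ (p - 1) + 1) :=
            mul_le_mul_of_nonneg_left hb (by positivity)
          linarith

private lemma stmt6_ratio_step {u₀ u₁ F₀ F₁ m H L d : ℝ} (hu₀ : 0 < u₀) (hu₁ : 0 < u₁)
    (hm : 0 < m) (hmF : m ≤ F₀) (hF₁ : 0 < F₁) (hH : u₀ ≤ H)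
    (hratio : u₁ / u₀ ≤ F₁ / F₀) (hF : |F₁ - F₀| ≤ L * d) (hd : 0 ≤ d) :
    u₁ - u₀ ≤ H * L * d / m := by
  have hF₀ : 0 < F₀ := lt_of_lt_of_le hm hmF
  have hLd : 0 ≤ L * d := le_trans (abs_nonneg _) hF
  have hH0 : 0 < H := lt_of_lt_of_le hu₀ hH
  have hmul : u₁ * F₀ ≤ F₁ * u₀ := (div_le_div_iff₀ hu₀ hF₀).mp hratio
  rcases le_or_gt u₁ u₀ with hle | hlt
  · have : 0 ≤ H * L * d / m :=
      div_nonneg (by rw [mul_assoc]; exact mul_nonneg hH0.le hLd) hm.le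
    linarith
  · have hdiff : F₁ - F₀ ≤ L * d := le_trans (le_abs_self _) hF
    have h1 : (u₁ - u₀) * F₀ ≤ u₀ * (F₁ - F₀) := by nlinarith
    have h2 : (u₁ - u₀) * m ≤ H * (L * d) := by nlinarith
    rw [le_div_iff₀ hm]
    nlinarith

set_option maxHeartbeats 1000000 in
/-- a positive function on (a,b) (with b−a ≤ π√((N−1)/K), K>0, N>1) satisfying the
two-sided sine-ratio bounds is locally Lipschitz on (a,b). -/
theorem stmt_6 (K N a b : ℝ) (hK : 0 < K) (hN : 1 < N) (hab : a < b)
    (hD : b - a ≤ Real.pi * Real.sqrt ((N - 1) / K))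
    (h : ℝ → ℝ) (hpos : ∀ t ∈ Set.Ioo a b, 0 < h t)
    (hbound : ∀ t₀ ∈ Set.Ioo a b, ∀ t₁ ∈ Set.Ioo a b, t₀ < t₁ →
      (Real.sin ((b - t₁) * Real.sqrt (K / (N - 1))) /
        Real.sin ((b - t₀) * Real.sqrt (K / (N - 1)))) ^ (N - 1) ≤ h t₁ / h t₀ ∧
      h t₁ / h t₀ ≤ (Real.sin ((t₁ - a) * Real.sqrt (K / (N - 1))) /
        Real.sin ((t₀ - a) * Real.sqrt (K / (N - 1)))) ^ (N - 1)) :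
    ∀ x ∈ Set.Ioo a b, ∃ ε > 0, ∃ C : NNReal,
      LipschitzOnWith C h (Set.Ioo a b ∩ Metric.ball x ε) := by
  have hN1 : (0:ℝ) < N - 1 := by linarith
  set s0 : ℝ := Real.sqrt (K / (N - 1)) with hs0_def
  have hs0 : 0 < s0 := Real.sqrt_pos.mpr (div_pos hK hN1)
  have hinv : Real.sqrt ((N - 1) / K) * s0 = 1 := by
    rw [hs0_def, ← Real.sqrt_mul (by positivity)]
    have : (N - 1) / K * (K / (N - 1)) = 1 := by field_simp
    rw [this, Real.sqrt_one]
  have hπ : (b - a) * s0 ≤ π := by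
    calc (b - a) * s0 ≤ (π * Real.sqrt ((N - 1) / K)) * s0 :=
          mul_le_mul_of_nonneg_right (by linarith) hs0.le
      _ = π * (Real.sqrt ((N - 1) / K) * s0) := by ring
      _ = π := by rw [hinv, mul_one]
  have hsinA : ∀ t ∈ Set.Ioo a b, 0 < Real.sin ((t - a) * s0) := by
    intro t ht
    apply Real.sin_pos_of_pos_of_lt_pi
    · have : 0 < t - a := by linarith [ht.1]
      positivity
    · have h1 : (t - a) * s0 < (b - a) * s0 :=
        mul_lt_mul_of_pos_right (by linarith [ht.2]) hs0
      linarith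
  have hsinB : ∀ t ∈ Set.Ioo a b, 0 < Real.sin ((b - t) * s0) := by
    intro t ht
    apply Real.sin_pos_of_pos_of_lt_pi
    · have : 0 < b - t := by linarith [ht.2]
      positivity
    · have h1 : (b - t) * s0 < (b - a) * s0 :=
        mul_lt_mul_of_pos_right (by linarith [ht.1]) hs0
      linarith
  intro x hx
  obtain ⟨hax, hxb⟩ := hx
  set ε : ℝ := min (x - a) (b - x) / 3 with hε_def
  have hε : 0 < ε := by
    have : 0 < min (x - a) (b - x) := lt_min (by linarith) (by linarith)
    positivity
  have h3a : 3 * ε ≤ x - a := by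
    have := min_le_left (x - a) (b - x); rw [hε_def]; linarith
  have h3b : 3 * ε ≤ b - x := by
    have := min_le_right (x - a) (b - x); rw [hε_def]; linarith
  set J : Set ℝ := Set.Icc (x - ε) (x + ε) with hJ_def
  have hJsub : J ⊆ Set.Ioo a b := by
    intro t ht
    exact ⟨by linarith [ht.1], by linarith [ht.2]⟩
  set S : Set ℝ := Set.Ioo a b ∩ Metric.ball x ε with hS_def
  have hSsub : S ⊆ J := by
    intro t ht
    have := Metric.mem_ball.mp ht.2
    rw [Real.dist_eq] at this
    have h2 := abs_lt.mp this
    exact ⟨by linarith [h2.1], by linarith [h2.2]⟩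
  set p0 : ℝ := x - 2 * ε with hp0_def
  have hp0 : p0 ∈ Set.Ioo a b := ⟨by linarith, by linarith⟩
  have hp0lt : ∀ t ∈ S, p0 < t := by
    intro t ht
    have := Metric.mem_ball.mp ht.2
    rw [Real.dist_eq] at this
    have h2 := abs_lt.mp this
    linarith [h2.1]
  -- the two sine functions
  set φ : ℝ → ℝ := fun t => Real.sin ((t - a) * s0) with hφ_def
  set ψ : ℝ → ℝ := fun t => Real.sin ((b - t) * s0) with hψ_def
  have hφcont : ContinuousOn φ J := (by fun_prop : Continuous φ).continuousOn
  have hψcont : ContinuousOn ψ J := (by fun_prop : Continuous ψ).continuousOn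
  have hJne : J.Nonempty := ⟨x, by constructor <;> simp <;> linarith⟩
  obtain ⟨tF, htFJ, htFmin⟩ := isCompact_Icc.exists_isMinOn hJne hφcont
  obtain ⟨tG, htGJ, htGmin⟩ := isCompact_Icc.exists_isMinOn hJne hψcont
  set mF0 : ℝ := φ tF with hmF0_def
  set mG0 : ℝ := ψ tG with hmG0_def
  have hmF0 : 0 < mF0 := hsinA tF (hJsub htFJ)
  have hmG0 : 0 < mG0 := hsinB tG (hJsub htGJ)
  have hφlow : ∀ t ∈ J, mF0 ≤ φ t := fun t ht => isMinOn_iff.mp htFmin t ht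
  have hψlow : ∀ t ∈ J, mG0 ≤ ψ t := fun t ht => isMinOn_iff.mp htGmin t ht
  have hφ1 : ∀ t, φ t ≤ 1 := fun t => Real.sin_le_one _
  have hψ1 : ∀ t, ψ t ≤ 1 := fun t => Real.sin_le_one _
  -- derivatives
  have hφd : ∀ t, HasDerivAt φ (Real.cos ((t - a) * s0) * s0) t := by
    intro t
    have h1 : HasDerivAt (fun t : ℝ => (t - a) * s0) s0 t := by
      simpa using ((hasDerivAt_id t).sub_const a).mul_const s0
    exact (Real.hasDerivAt_sin ((t - a) * s0)).comp t h1
  have hψd : ∀ t, HasDerivAt ψ (Real.cos ((b - t) * s0) * (-s0)) t := by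
    intro t
    have h1 : HasDerivAt (fun t : ℝ => (b - t) * s0) (-s0) t := by
      have := ((hasDerivAt_id t).const_sub b).mul_const s0
      simpa using this
    exact (Real.hasDerivAt_sin ((b - t) * s0)).comp t h1
  have hφdb : ∀ t, |Real.cos ((t - a) * s0) * s0| ≤ s0 := by
    intro t
    rw [abs_mul, abs_of_pos hs0]
    exact mul_le_of_le_one_left hs0.le (Real.abs_cos_le_one _)
  have hψdb : ∀ t, |Real.cos ((b - t) * s0) * (-s0)| ≤ s0 := by
    intro t
    rw [abs_mul, abs_neg, abs_of_pos hs0]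
    exact mul_le_of_le_one_left hs0.le (Real.abs_cos_le_one _)
  -- Lipschitz bounds for φ^(N-1), ψ^(N-1) on J
  set LF : ℝ := s0 * (N - 1) * (mF0 ^ (N - 1 - 1) + 1) with hLF_def
  set LG : ℝ := s0 * (N - 1) * (mG0 ^ (N - 1 - 1) + 1) with hLG_def
  have hLF0 : 0 ≤ LF := by
    have := Real.rpow_nonneg hmF0.le (N - 1 - 1); positivity
  have hLG0 : 0 ≤ LG := by
    have := Real.rpow_nonneg hmG0.le (N - 1 - 1); positivity
  have lipF : ∀ t₀ ∈ J, ∀ t₁ ∈ J,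
      |φ t₁ ^ (N - 1) - φ t₀ ^ (N - 1)| ≤ LF * |t₁ - t₀| :=
    stmt6_rpow_lip (convex_Icc _ _) hN1 hmF0 (fun t _ => hφd t) hφlow
      (fun t _ => hφ1 t) (fun t _ => hφdb t)
  have lipG : ∀ t₀ ∈ J, ∀ t₁ ∈ J,
      |ψ t₁ ^ (N - 1) - ψ t₀ ^ (N - 1)| ≤ LG * |t₁ - t₀| :=
    stmt6_rpow_lip (convex_Icc _ _) hN1 hmG0 (fun t _ => hψd t) hψlow
      (fun t _ => hψ1 t) (fun t _ => hψdb t)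
  -- uniform upper bound for h on S
  have hFp0pos : 0 < φ p0 ^ (N - 1) := Real.rpow_pos_of_pos (hsinA p0 hp0) _
  set H : ℝ := h p0 / φ p0 ^ (N - 1) with hH_def
  have hHpos : 0 < H := div_pos (hpos p0 hp0) hFp0pos
  have hHbd : ∀ t ∈ S, h t ≤ H := by
    intro t ht
    have hb : h t / h p0 ≤ φ t ^ (N - 1) / φ p0 ^ (N - 1) := by
      have hb0 := (hbound p0 hp0 t ht.1 (hp0lt t ht)).2
      rw [Real.div_rpow (hsinA t ht.1).le (hsinA p0 hp0).le] at hb0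
      exact hb0
    have h1 : φ t ^ (N - 1) ≤ 1 :=
      Real.rpow_le_one (hsinA t ht.1).le (hφ1 t) hN1.le
    have hhp0 := hpos p0 hp0
    have hht := hpos t ht.1
    have h2 : h t * φ p0 ^ (N - 1) ≤ φ t ^ (N - 1) * h p0 :=
      (div_le_div_iff₀ hhp0 hFp0pos).mp hb
    rw [hH_def, le_div_iff₀ hFp0pos]
    linarith [h2, mul_nonneg (sub_nonneg.mpr h1) hhp0.le]
  -- the Lipschitz constant
  set C0 : ℝ := H * LF / mF0 ^ (N - 1) + H * LG / mG0 ^ (N - 1) with hC0_def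
  have hmFpos : 0 < mF0 ^ (N - 1) := Real.rpow_pos_of_pos hmF0 _
  have hmGpos : 0 < mG0 ^ (N - 1) := Real.rpow_pos_of_pos hmG0 _
  have hC00 : 0 ≤ C0 := by positivity
  -- key estimate
  have key : ∀ t₀ ∈ S, ∀ t₁ ∈ S, t₀ < t₁ → |h t₁ - h t₀| ≤ C0 * (t₁ - t₀) := by
    intro t₀ h₀ t₁ h₁ hlt
    have h₀J := hSsub h₀
    have h₁J := hSsub h₁
    have hb := hbound t₀ h₀.1 t₁ h₁.1 hlt
    have hφ0 := hsinA t₀ h₀.1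
    have hφt1 := hsinA t₁ h₁.1
    have hψ0 := hsinB t₀ h₀.1
    have hψt1 := hsinB t₁ h₁.1
    have hh0 := hpos t₀ h₀.1
    have hh1 := hpos t₁ h₁.1
    have hd : (0:ℝ) ≤ t₁ - t₀ := by linarith
    have habs : |t₁ - t₀| = t₁ - t₀ := abs_of_nonneg hd
    -- monotone lower bound for base values on J
    have hFlow0 : mF0 ^ (N - 1) ≤ φ t₀ ^ (N - 1) :=
      Real.rpow_le_rpow hmF0.le (hφlow t₀ h₀J) hN1.le
    have hGlow1 : mG0 ^ (N - 1) ≤ ψ t₁ ^ (N - 1) :=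
      Real.rpow_le_rpow hmG0.le (hψlow t₁ h₁J) hN1.le
    have hFpos1 : 0 < φ t₁ ^ (N - 1) := Real.rpow_pos_of_pos hφt1 _
    have hGpos0 : 0 < ψ t₀ ^ (N - 1) := Real.rpow_pos_of_pos hψ0 _
    have hGpos1 : 0 < ψ t₁ ^ (N - 1) := Real.rpow_pos_of_pos hψt1 _
    -- upper direction
    have hupper : h t₁ - h t₀ ≤ H * LF * (t₁ - t₀) / mF0 ^ (N - 1) := by
      have hb2 : h t₁ / h t₀ ≤ φ t₁ ^ (N - 1) / φ t₀ ^ (N - 1) := by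
        have hb2' := hb.2
        rw [Real.div_rpow hφt1.le hφ0.le] at hb2'
        exact hb2'
      have hFlip := lipF t₀ h₀J t₁ h₁J
      rw [habs] at hFlip
      exact stmt6_ratio_step hh0 hh1 hmFpos hFlow0 hFpos1 (hHbd t₀ h₀) hb2 hFlip hd
    -- lower direction
    have hlower : h t₀ - h t₁ ≤ H * LG * (t₁ - t₀) / mG0 ^ (N - 1) := by
      have hb1 : ψ t₁ ^ (N - 1) / ψ t₀ ^ (N - 1) ≤ h t₁ / h t₀ := by
        have hb1' := hb.1
        rw [Real.div_rpow hψt1.le hψ0.le] at hb1'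
        exact hb1'
      have hratio : h t₀ / h t₁ ≤ ψ t₀ ^ (N - 1) / ψ t₁ ^ (N - 1) := by
        rw [div_le_div_iff₀ hh1 hGpos1]
        have hmul := (div_le_div_iff₀ hGpos0 hh0).mp hb1
        linarith [hmul]
      have hGlip : |ψ t₀ ^ (N - 1) - ψ t₁ ^ (N - 1)| ≤ LG * (t₁ - t₀) := by
        have := lipG t₀ h₀J t₁ h₁J
        rw [habs] at this
        rwa [abs_sub_comm]
      exact stmt6_ratio_step hh1 hh0 hmGpos hGlow1 hGpos0 (hHbd t₁ h₁) hratio hGlip hd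
    have e1 : H * LF * (t₁ - t₀) / mF0 ^ (N - 1) = (H * LF / mF0 ^ (N - 1)) * (t₁ - t₀) := by
      ring
    have e2 : H * LG * (t₁ - t₀) / mG0 ^ (N - 1) = (H * LG / mG0 ^ (N - 1)) * (t₁ - t₀) := by
      ring
    have hterm1 : 0 ≤ (H * LF / mF0 ^ (N - 1)) * (t₁ - t₀) := by positivity
    have hterm2 : 0 ≤ (H * LG / mG0 ^ (N - 1)) * (t₁ - t₀) := by positivity
    rw [abs_le]
    constructor
    · rw [e2] at hlower
      rw [hC0_def]
      linarith [hlower, hterm1]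
    · rw [e1] at hupper
      rw [hC0_def]
      linarith [hupper, hterm2]
  -- conclude
  refine ⟨ε, hε, Real.toNNReal C0, ?_⟩
  apply LipschitzOnWith.of_dist_le_mul
  intro t₀ h₀ t₁ h₁
  have hC0le : C0 ≤ (Real.toNNReal C0 : ℝ) := by
    rw [Real.coe_toNNReal']
    exact le_max_left _ _
  rcases lt_trichotomy t₀ t₁ with hlt | heq | hgt
  · have := key t₀ h₀ t₁ h₁ hlt
    rw [Real.dist_eq, Real.dist_eq, abs_sub_comm]
    calc |h t₁ - h t₀| ≤ C0 * (t₁ - t₀) := this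
      _ ≤ (Real.toNNReal C0 : ℝ) * |t₀ - t₁| := by
          rw [abs_sub_comm, abs_of_nonneg (by linarith : (0:ℝ) ≤ t₁ - t₀)]
          exact mul_le_mul_of_nonneg_right hC0le (by linarith)
  · subst heq; simp
  · have := key t₁ h₁ t₀ h₀ hgt
    rw [Real.dist_eq, Real.dist_eq]
    calc |h t₀ - h t₁| ≤ C0 * (t₀ - t₁) := this
      _ ≤ (Real.toNNReal C0 : ℝ) * |t₀ - t₁| := by
          rw [abs_of_nonneg (by linarith : (0:ℝ) ≤ t₀ - t₁)]
          exact mul_le_mul_of_nonneg_right hC0le (by linarith)
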